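/- (Uniform gradient norm bound, Lemma 1 eq. (14), deterministic errors.) Under the setup of the cumulative distance bound — A : ℝⁿ → ℝᵐ nonzero linear with χ = σ_min/σ_max; f_k convex differentiable with L-Lipschitz gradient, minimizer sets X_k* = {x : A x = u_k*}, ∇f_k vanishing on X_k*, quadratic growth constant μ > 0; step size α > 0 with αL(1+ν)² < 1, ℓ² := 1 − μα(1 − αL(1+ν)²) + 2ναL with 0 < ℓ < χ, ζ := α(1+αL)/ℓ; errors ‖e_k‖ ≤ ε_k + ν‖∇f_k(x_k)‖ with ε_k ≤ ε for all k; iterates x_{k+1} = x_k − α(∇f_k(x_k) + e_k) — assume additionally that there exist x_k* ∈ X_k* with ‖x_{k+1}* − x_k*‖ ≤ σ_v for all k. Then for every k ≥ 1, ‖∇f_k(x_k)‖ ≤ L·dist(x_1, X_1*) + L(σ_v + ζε)/(χ − ℓ). -/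

import Mathlib

open scoped RealInnerProductSpace

section Aux

variable {E : Type*} [NormedAddCommGroup E] [InnerProductSpace ℝ E] [CompleteSpace E]

lemma inner_gradient_apply (f : E → ℝ) (x v : E) :
    ⟪gradient f x, v⟫ = fderiv ℝ f x v := by
  rw [gradient]
  exact InnerProductSpace.toDual_symm_apply

lemma grad_ineq_of_convex (f : E → ℝ) (hf : ConvexOn ℝ Set.univ f)
    (hd : Differentiable ℝ f) (x y : E) :
    f x + ⟪gradient f x, y - x⟫ ≤ f y := by
  set g : ℝ →ᵃ[ℝ] E := AffineMap.lineMap x y with hg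
  have hgt : ∀ t : ℝ, g t = x + t • (y - x) := by
    intro t
    simp [hg, AffineMap.lineMap_apply_module]
    module
  have hφc : ConvexOn ℝ Set.univ (f ∘ g) := by
    have := hf.comp_affineMap g
    simpa using this
  have hline : HasDerivAt (fun t : ℝ => g t) (y - x) 0 := by
    have : HasDerivAt (fun t : ℝ => x + t • (y - x)) ((1 : ℝ) • (y - x)) 0 := by
      exact ((hasDerivAt_id (0:ℝ)).smul_const (y - x)).const_add x
    have heq : (fun t : ℝ => g t) = fun t : ℝ => x + t • (y - x) := funext hgt
    rw [heq]
    simpa using this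
  have hderiv : HasDerivAt (f ∘ g) (fderiv ℝ f x (y - x)) 0 := by
    have h0 : g 0 = x := by simp [hgt]
    have := (hd (g 0)).hasFDerivAt.comp_hasDerivAt 0 hline
    rw [h0] at this
    exact this
  have hslope := hφc.le_slope_of_hasDerivAt (Set.mem_univ 0) (Set.mem_univ 1) one_pos hderiv
  have h0 : (f ∘ g) 0 = f x := by simp [hgt]
  have h1 : (f ∘ g) 1 = f y := by simp [hgt]
  rw [slope_def_field] at hslope
  rw [inner_gradient_apply]
  simp only [h0, h1] at hslope
  have : fderiv ℝ f x (y - x) ≤ f y - f x := by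
    simpa using hslope
  linarith

lemma descent_lemma (f : E → ℝ) (hd : Differentiable ℝ f) {L : ℝ}
    (hLip : ∀ u v : E, ‖gradient f u - gradient f v‖ ≤ L * ‖u - v‖) (x y : E) :
    f y ≤ f x + ⟪gradient f x, y - x⟫ + L / 2 * ‖y - x‖ ^ 2 := by
  set d : E := y - x with hdd
  set φ : ℝ → ℝ := fun t => f (x + t • d) with hφ
  set g : ℝ → ℝ := fun t => ⟪gradient f (x + t • d), d⟫ with hgdef
  have hgradcont : Continuous (fun u : E => gradient f u) := by
    have : LipschitzWith (Real.toNNReal L) (fun u : E => gradient f u) := by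
      apply LipschitzWith.of_dist_le_mul
      intro u v
      rw [dist_eq_norm, dist_eq_norm]
      calc ‖gradient f u - gradient f v‖ ≤ L * ‖u - v‖ := hLip u v
        _ ≤ Real.toNNReal L * ‖u - v‖ := by
            apply mul_le_mul_of_nonneg_right (Real.le_coe_toNNReal L) (norm_nonneg _)
    exact this.continuous
  have hline : ∀ t : ℝ, HasDerivAt (fun t : ℝ => x + t • d) d t := by
    intro t
    have : HasDerivAt (fun t : ℝ => x + t • d) ((1 : ℝ) • d) t :=
      ((hasDerivAt_id t).smul_const d).const_add x
    simpa using this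
  have hφ' : ∀ t : ℝ, HasDerivAt φ (g t) t := by
    intro t
    have := (hd (x + t • d)).hasFDerivAt.comp_hasDerivAt t (hline t)
    simp only [hφ, hgdef, inner_gradient_apply]
    exact this
  have hgcont : Continuous g := by
    apply Continuous.inner
    · exact hgradcont.comp (by continuity)
    · exact continuous_const
  have hftc : ∫ t in (0:ℝ)..1, g t = φ 1 - φ 0 :=
    intervalIntegral.integral_eq_sub_of_hasDerivAt (fun t _ => hφ' t)
      (hgcont.intervalIntegrable 0 1)
  have hpt : ∀ t ∈ Set.Icc (0:ℝ) 1, g t ≤ g 0 + (L * ‖d‖ ^ 2) * t := by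
    intro t ht
    have h1 : g t - g 0 = ⟪gradient f (x + t • d) - gradient f (x + (0:ℝ) • d), d⟫ := by
      rw [inner_sub_left]
    have h2 : ⟪gradient f (x + t • d) - gradient f (x + (0:ℝ) • d), d⟫ ≤
        ‖gradient f (x + t • d) - gradient f (x + (0:ℝ) • d)‖ * ‖d‖ :=
      real_inner_le_norm _ _
    have h3 : ‖gradient f (x + t • d) - gradient f (x + (0:ℝ) • d)‖ ≤ L * (t * ‖d‖) := by
      have := hLip (x + t • d) (x + (0:ℝ) • d)
      have he : (x + t • d) - (x + (0:ℝ) • d) = t • d := by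
        simp
      rw [he] at this
      rw [norm_smul] at this
      simpa [abs_of_nonneg ht.1] using this
    nlinarith [norm_nonneg d, mul_le_mul_of_nonneg_right h3 (norm_nonneg d)]
  have hint : ∫ t in (0:ℝ)..1, g t ≤ ∫ t in (0:ℝ)..1, (g 0 + (L * ‖d‖ ^ 2) * t) := by
    apply intervalIntegral.integral_mono_on (by norm_num)
      (hgcont.intervalIntegrable 0 1)
      ((continuous_const.add (continuous_const.mul continuous_id)).intervalIntegrable 0 1)
    exact hpt
  have hval : ∫ t in (0:ℝ)..1, (g 0 + (L * ‖d‖ ^ 2) * t) = g 0 + L / 2 * ‖d‖ ^ 2 := by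
    have hi2 : IntervalIntegrable (fun t : ℝ => (L * ‖d‖ ^ 2) * t)
        MeasureTheory.volume 0 1 := by
      apply Continuous.intervalIntegrable; fun_prop
    rw [intervalIntegral.integral_add intervalIntegrable_const hi2]
    rw [intervalIntegral.integral_const_mul, integral_id]
    simp
    ring
  have hφ0 : φ 0 = f x := by simp [hφ]
  have hφ1 : φ 1 = f y := by simp [hφ, hdd]
  have hg0 : g 0 = ⟪gradient f x, y - x⟫ := by simp [hgdef, hdd]
  rw [hval] at hint
  rw [hftc] at hint
  rw [hφ0, hφ1, hg0] at hint
  linarith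

lemma grad_sq_le_gap (f : E → ℝ) (hd : Differentiable ℝ f) {L : ℝ} (hL : 0 < L)
    (hLip : ∀ u v : E, ‖gradient f u - gradient f v‖ ≤ L * ‖u - v‖) (x p : E)
    (hp : ∀ y : E, f p ≤ f y) :
    ‖gradient f x‖ ^ 2 / (2 * L) ≤ f x - f p := by
  set g : E := gradient f x with hg
  set y : E := x - L⁻¹ • g with hy
  have h := descent_lemma f hd hLip x y
  have he : y - x = -(L⁻¹ • g) := by rw [hy]; abel
  rw [he, inner_neg_right, real_inner_smul_right, real_inner_self_eq_norm_sq] at h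
  have hnorm : ‖-(L⁻¹ • g)‖ ^ 2 = (L⁻¹) ^ 2 * ‖g‖ ^ 2 := by
    rw [norm_neg, norm_smul, Real.norm_eq_abs, abs_of_pos (inv_pos.mpr hL), mul_pow]
  rw [hnorm] at h
  have hpy := hp y
  have hLinv : L * L⁻¹ = 1 := mul_inv_cancel₀ (ne_of_gt hL)
  have hLinv2 : L ^ 2 * (L⁻¹) ^ 2 = 1 := by
    rw [← mul_pow, hLinv, one_pow]
  rw [div_le_iff₀ (by positivity)]
  nlinarith [mul_le_mul_of_nonneg_left (le_trans hpy h) (by positivity : (0:ℝ) ≤ 2 * L),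
    sq_nonneg ‖g‖, hL.le]

end Aux

set_option maxHeartbeats 2000000 in
/-- Uniform gradient norm bound (Lemma 1 eq. (14), deterministic errors):
for every `k ≥ 1`, `‖∇f_k(x_k)‖ ≤ L·dist(x_1, X_1*) + L(σ_v + ζε)/(χ − ℓ)`. -/
theorem uniform_gradient_norm_bound_inexact_ogd {n m : ℕ}
    (A : EuclideanSpace ℝ (Fin n) →L[ℝ] EuclideanSpace ℝ (Fin m)) (hA : A ≠ 0)
    (σmin σmax χ : ℝ)
    (hσmin : σmin = sInf {c : ℝ | ∃ x : EuclideanSpace ℝ (Fin n),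
      x ≠ 0 ∧ x ∈ (LinearMap.ker (A : EuclideanSpace ℝ (Fin n) →ₗ[ℝ] EuclideanSpace ℝ (Fin m)))ᗮ ∧ c = ‖A x‖ / ‖x‖})
    (hσmax : σmax = ‖A‖) (hχ : χ = σmin / σmax)
    (f : ℕ → EuclideanSpace ℝ (Fin n) → ℝ)
    (hconv : ∀ k, ConvexOn ℝ Set.univ (f k)) (hdiff : ∀ k, Differentiable ℝ (f k))
    (L : ℝ) (hL : 0 < L)
    (hLip : ∀ k, ∀ u v : EuclideanSpace ℝ (Fin n),
      ‖gradient (f k) u - gradient (f k) v‖ ≤ L * ‖u - v‖)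
    (ustar : ℕ → EuclideanSpace ℝ (Fin m)) (hrange : ∀ k, ustar k ∈ Set.range A)
    (Xstar : ℕ → Set (EuclideanSpace ℝ (Fin n)))
    (hXstar : ∀ k, Xstar k = {x | A x = ustar k})
    (hXmin : ∀ k, Xstar k = {x | ∀ y : EuclideanSpace ℝ (Fin n), f k x ≤ f k y})
    (hgrad0 : ∀ k, ∀ y ∈ Xstar k, gradient (f k) y = 0)
    (fstar : ℕ → ℝ) (hfstar : ∀ k, ∀ x ∈ Xstar k, f k x = fstar k)
    (μ : ℝ) (hμ : 0 < μ)
    (hQG : ∀ k, ∀ x : EuclideanSpace ℝ (Fin n),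
      μ / 2 * Metric.infDist x (Xstar k) ^ 2 ≤ f k x - fstar k)
    (ε : ℕ → ℝ) (hεnn : ∀ k, 0 ≤ ε k) (εbar : ℝ) (hεbar : ∀ k, ε k ≤ εbar)
    (ν α : ℝ) (hν : 0 ≤ ν) (hα : 0 < α)
    (hstep : α * L * (1 + ν) ^ 2 < 1)
    (ℓ ζ : ℝ) (hℓpos : 0 < ℓ)
    (hℓsq : ℓ ^ 2 = 1 - μ * α * (1 - α * L * (1 + ν) ^ 2) + 2 * ν * α * L)
    (hℓχ : ℓ < χ) (hζ : ζ = α * (1 + α * L) / ℓ)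
    (x e : ℕ → EuclideanSpace ℝ (Fin n))
    (hrec : ∀ k, 1 ≤ k → x (k + 1) = x k - α • (gradient (f k) (x k) + e k))
    (herr : ∀ k, 1 ≤ k → ‖e k‖ ≤ ε k + ν * ‖gradient (f k) (x k)‖)
    (xstar : ℕ → EuclideanSpace ℝ (Fin n)) (hxstar : ∀ k, xstar k ∈ Xstar k)
    (σv : ℝ) (hσv : ∀ k, 1 ≤ k → ‖xstar (k + 1) - xstar k‖ ≤ σv) :
    ∀ k, 1 ≤ k → ‖gradient (f k) (x k)‖ ≤
      L * Metric.infDist (x 1) (Xstar 1) + L * (σv + ζ * εbar) / (χ - ℓ) := by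
  classical
  -- basic positivity
  have hσmax0 : 0 < σmax := by rw [hσmax]; exact norm_pos_iff.mpr hA
  have hχpos : 0 < χ := lt_trans hℓpos hℓχ
  have hσmin0 : 0 < σmin := by
    have h : σmin = χ * σmax := by rw [hχ, div_mul_cancel₀ _ (ne_of_gt hσmax0)]
    rw [h]; positivity
  -- a nonzero element of (ker A)ᗮ
  have hker : LinearMap.ker (A : EuclideanSpace ℝ (Fin n) →ₗ[ℝ] EuclideanSpace ℝ (Fin m)) ≠ ⊤ := by
    intro h
    apply hA
    ext1 v
    have hv : v ∈ LinearMap.ker (A : EuclideanSpace ℝ (Fin n) →ₗ[ℝ] EuclideanSpace ℝ (Fin m)) := h ▸ Submodule.mem_top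
    simpa using hv
  have hKbot : (LinearMap.ker (A : EuclideanSpace ℝ (Fin n) →ₗ[ℝ] EuclideanSpace ℝ (Fin m)))ᗮ ≠ ⊥ := by
    intro h
    exact hker (Submodule.orthogonal_eq_bot_iff.mp h)
  obtain ⟨x₀, hx₀K, hx₀⟩ := Submodule.exists_mem_ne_zero_of_ne_bot hKbot
  obtain ⟨S, hSdef⟩ : ∃ S : Set ℝ, S = {c : ℝ | ∃ x : EuclideanSpace ℝ (Fin n),
      x ≠ 0 ∧ x ∈ (LinearMap.ker (A : EuclideanSpace ℝ (Fin n) →ₗ[ℝ] EuclideanSpace ℝ (Fin m)))ᗮ ∧ c = ‖A x‖ / ‖x‖} := ⟨_, rfl⟩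
  rw [← hSdef] at hσmin
  have hbdd : BddBelow S := by
    refine ⟨0, ?_⟩
    rw [hSdef]
    rintro c ⟨z, hz0, hzK, rfl⟩
    positivity
  have hmemS : ∀ z : EuclideanSpace ℝ (Fin n), z ≠ 0 → z ∈ (LinearMap.ker (A : EuclideanSpace ℝ (Fin n) →ₗ[ℝ] EuclideanSpace ℝ (Fin m)))ᗮ →
      ‖A z‖ / ‖z‖ ∈ S := by
    intro z h1 h2
    rw [hSdef]
    exact ⟨z, h1, h2, rfl⟩
  have hσminmax : σmin ≤ σmax := by
    rw [hσmin, hσmax]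
    refine le_trans (csInf_le hbdd (hmemS x₀ hx₀ hx₀K)) ?_
    rw [div_le_iff₀ (norm_pos_iff.mpr hx₀)]
    exact A.le_opNorm x₀
  have hχ1 : χ ≤ 1 := by
    rw [hχ]
    exact (div_le_one hσmax0).mpr hσminmax
  have hℓ1 : ℓ < 1 := lt_of_lt_of_le hℓχ hχ1
  have hAx : ∀ k, A (xstar k) = ustar k := by
    intro k
    have := hxstar k
    rwa [hXstar k] at this
  -- D1 : lower singular-value bound
  have hD1 : ∀ k (z : EuclideanSpace ℝ (Fin n)),
      σmin * Metric.infDist z (Xstar k) ≤ ‖A z - ustar k‖ := by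
    intro k z
    obtain ⟨v, hvdef⟩ : ∃ v : EuclideanSpace ℝ (Fin n),
      v = ↑(Submodule.orthogonalProjectionOnto (LinearMap.ker (A : EuclideanSpace ℝ (Fin n) →ₗ[ℝ] EuclideanSpace ℝ (Fin m))) (z - xstar k)) := ⟨_, rfl⟩
    have hvker : A v = 0 := by
      have hm : v ∈ LinearMap.ker (A : EuclideanSpace ℝ (Fin n) →ₗ[ℝ] EuclideanSpace ℝ (Fin m)) := by
        rw [hvdef]
        exact (Submodule.orthogonalProjectionOnto (LinearMap.ker (A : EuclideanSpace ℝ (Fin n) →ₗ[ℝ] EuclideanSpace ℝ (Fin m))) (z - xstar k)).2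
      exact hm
    obtain ⟨w, hwdef⟩ : ∃ w : EuclideanSpace ℝ (Fin n), w = z - xstar k - v := ⟨_, rfl⟩
    have hwK : w ∈ (LinearMap.ker (A : EuclideanSpace ℝ (Fin n) →ₗ[ℝ] EuclideanSpace ℝ (Fin m)))ᗮ := by
      rw [hwdef, hvdef]
      exact Submodule.sub_starProjection_mem_orthogonal (K := LinearMap.ker (A : EuclideanSpace ℝ (Fin n) →ₗ[ℝ] EuclideanSpace ℝ (Fin m))) (z - xstar k)
    have hmem : xstar k + v ∈ Xstar k := by
      rw [hXstar k]
      show A (xstar k + v) = ustar k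
      rw [map_add, hAx k, hvker, add_zero]
    have hdist : Metric.infDist z (Xstar k) ≤ ‖w‖ := by
      have h := Metric.infDist_le_dist_of_mem (x := z) hmem
      rw [dist_eq_norm] at h
      have he : z - (xstar k + v) = w := by rw [hwdef]; abel
      rwa [he] at h
    have hAw : A z - ustar k = A w := by
      rw [hwdef, map_sub, map_sub, hAx k, hvker, sub_zero]
    by_cases hw0 : w = 0
    · have h0 : Metric.infDist z (Xstar k) = 0 :=
        le_antisymm (by simpa [hw0] using hdist) Metric.infDist_nonneg
      rw [h0, mul_zero, hAw]
      exact norm_nonneg _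
    · have hr : σmin ≤ ‖A w‖ / ‖w‖ := by
        rw [hσmin]
        exact csInf_le hbdd (hmemS w hw0 hwK)
      have hwpos : 0 < ‖w‖ := norm_pos_iff.mpr hw0
      rw [hAw]
      calc σmin * Metric.infDist z (Xstar k) ≤ σmin * ‖w‖ :=
            mul_le_mul_of_nonneg_left hdist hσmin0.le
        _ ≤ (‖A w‖ / ‖w‖) * ‖w‖ := mul_le_mul_of_nonneg_right hr hwpos.le
        _ = ‖A w‖ := div_mul_cancel₀ _ (ne_of_gt hwpos)
  -- projections exist
  have hXcl : ∀ k, IsClosed (Xstar k) := by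
    intro k
    rw [hXstar k]
    exact isClosed_eq A.continuous continuous_const
  have hXne : ∀ k, (Xstar k).Nonempty := fun k => ⟨xstar k, hxstar k⟩
  have hproj : ∀ k (z : EuclideanSpace ℝ (Fin n)),
      ∃ p ∈ Xstar k, Metric.infDist z (Xstar k) = dist z p :=
    fun k z => (hXcl k).exists_infDist_eq_dist (hXne k) z
  -- D2 : upper bound
  have hD2 : ∀ k (z : EuclideanSpace ℝ (Fin n)),
      ‖A z - ustar k‖ ≤ σmax * Metric.infDist z (Xstar k) := by
    intro k z
    obtain ⟨p, hp, hpd⟩ := hproj k z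
    have hAp : A p = ustar k := by
      have := hp; rwa [hXstar k] at this
    calc ‖A z - ustar k‖ = ‖A (z - p)‖ := by rw [map_sub, hAp]
      _ ≤ ‖A‖ * ‖z - p‖ := A.le_opNorm _
      _ = σmax * Metric.infDist z (Xstar k) := by rw [hσmax, hpd, dist_eq_norm]
  -- gradient bounded by distance
  have hGd : ∀ k (z : EuclideanSpace ℝ (Fin n)),
      ‖gradient (f k) z‖ ≤ L * Metric.infDist z (Xstar k) := by
    intro k z
    obtain ⟨p, hp, hpd⟩ := hproj k z
    have h0 : gradient (f k) p = 0 := hgrad0 k p hp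
    calc ‖gradient (f k) z‖ = ‖gradient (f k) z - gradient (f k) p‖ := by rw [h0, sub_zero]
      _ ≤ L * ‖z - p‖ := hLip k z p
      _ = L * Metric.infDist z (Xstar k) := by rw [hpd, dist_eq_norm]
  have hminf : ∀ k (y : EuclideanSpace ℝ (Fin n)), f k (xstar k) ≤ f k y := by
    intro k y
    have := hxstar k
    rw [hXmin k] at this
    exact this y
  have hfsx : ∀ k, f k (xstar k) = fstar k := fun k => hfstar k _ (hxstar k)
  -- step-size facts
  have hν2 : (1:ℝ) ≤ (1 + ν) ^ 2 := by nlinarith [hν, sq_nonneg ν]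
  have hαL : α * L < 1 := by
    have t := mul_le_mul_of_nonneg_left hν2 (mul_nonneg hα.le hL.le)
    rw [mul_one] at t
    linarith only [t, hstep]
  -- contraction step
  have hcontr : ∀ k, 1 ≤ k → Metric.infDist (x (k+1)) (Xstar k) ≤
      ℓ * Metric.infDist (x k) (Xstar k) + α * ε k := by
    intro k hk
    obtain ⟨p, hp, hpd⟩ := hproj k (x k)
    obtain ⟨d, hddef⟩ : ∃ r : ℝ, r = Metric.infDist (x k) (Xstar k) := ⟨_, rfl⟩
    obtain ⟨g, hgdef⟩ : ∃ g : EuclideanSpace ℝ (Fin n), g = gradient (f k) (x k) := ⟨_, rfl⟩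
    obtain ⟨G, hGdef⟩ : ∃ r : ℝ, r = ‖g‖ := ⟨_, rfl⟩
    have hd0 : 0 ≤ d := hddef ▸ Metric.infDist_nonneg
    have hG0 : 0 ≤ G := hGdef ▸ norm_nonneg g
    have hfp : f k p = fstar k := hfstar k p hp
    have hnorm_xp : ‖x k - p‖ = d := by
      rw [hddef, hpd]
      exact (dist_eq_norm _ _).symm
    have hcx : f k (x k) - fstar k ≤ ⟪g, x k - p⟫ := by
      have h := grad_ineq_of_convex (f k) (hconv k) (hdiff k) (x k) p
      have hni : ⟪gradient (f k) (x k), p - x k⟫ = -⟪gradient (f k) (x k), x k - p⟫ := by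
        rw [← inner_neg_right]
        congr 1
        abel
      rw [hni, hfp] at h
      rw [hgdef]
      linarith
    have hqg : μ / 2 * d ^ 2 ≤ f k (x k) - fstar k := by
      rw [hddef]
      exact hQG k (x k)
    have hgs : G ^ 2 / (2 * L) ≤ f k (x k) - fstar k := by
      have h := grad_sq_le_gap (f k) (hdiff k) hL (hLip k) (x k) (xstar k) (hminf k)
      rw [hfsx k] at h
      rw [hGdef, hgdef]
      exact h
    have hgs2 : G ^ 2 ≤ 2 * L * (f k (x k) - fstar k) := by
      rw [div_le_iff₀ (by positivity)] at hgs
      linarith only [hgs]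
    have hGLd : G ≤ L * d := by
      rw [hGdef, hgdef, hddef]
      exact hGd k (x k)
    obtain ⟨s, hsdef⟩ : ∃ r : ℝ, r = ‖x k - p - α • g‖ := ⟨_, rfl⟩
    have hs0 : 0 ≤ s := hsdef ▸ norm_nonneg _
    have hip : ⟪x k - p, α • g⟫ = α * ⟪g, x k - p⟫ := by
      rw [real_inner_smul_right, real_inner_comm]
    have hns : ‖α • g‖ ^ 2 = α ^ 2 * G ^ 2 := by
      rw [norm_smul, Real.norm_eq_abs, abs_of_pos hα, mul_pow, hGdef]
    have hs2 : s ^ 2 = d ^ 2 - 2 * (α * ⟪g, x k - p⟫) + α ^ 2 * G ^ 2 := by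
      rw [hsdef, norm_sub_sq_real, hip, hns, hnorm_xp]
    obtain ⟨θ, hθdef⟩ : ∃ r : ℝ, r = 1 - α * L * (1 + ν) ^ 2 := ⟨_, rfl⟩
    have hθpos : 0 < θ := by rw [hθdef]; linarith
    have hθle : θ ≤ 1 := by
      rw [hθdef]
      have t : 0 ≤ α * L * (1 + ν) ^ 2 := by positivity
      linarith only [t]
    have hFcomb : θ * (μ / 2 * d ^ 2) + (1 - θ) * (G ^ 2 / (2 * L)) ≤ ⟪g, x k - p⟫ := by
      have t1 := mul_le_mul_of_nonneg_left hqg hθpos.le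
      have t2 := mul_le_mul_of_nonneg_left hgs (by linarith only [hθle] : (0:ℝ) ≤ 1 - θ)
      linarith only [t1, t2, hcx]
    have hsd : s ≤ d := by
      have h2 : s ^ 2 ≤ d ^ 2 := by
        have hF0 : 0 ≤ f k (x k) - fstar k := by
          have hq0 : 0 ≤ μ / 2 * d ^ 2 := by positivity
          linarith only [hq0, hqg]
        have c1 : α ^ 2 * G ^ 2 ≤ α ^ 2 * (2 * L * (f k (x k) - fstar k)) :=
          mul_le_mul_of_nonneg_left hgs2 (sq_nonneg α)
        have c2 : (α * L) * (2 * α * (f k (x k) - fstar k)) ≤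
            1 * (2 * α * (f k (x k) - fstar k)) :=
          mul_le_mul_of_nonneg_right hαL.le (by positivity)
        have c3 := mul_le_mul_of_nonneg_left hcx (by positivity : (0:ℝ) ≤ 2 * α)
        linarith only [hs2, c1, c2, c3]
      exact le_of_pow_le_pow_left₀ two_ne_zero hd0 h2
    have hid : 2 * α * (θ * (μ / 2 * d ^ 2) + (1 - θ) * (G ^ 2 / (2 * L))) =
        μ * α * θ * d ^ 2 + α ^ 2 * (1 + ν) ^ 2 * G ^ 2 := by
      rw [hθdef]
      field_simp
      ring
    have hIl := mul_le_mul_of_nonneg_left hFcomb (by positivity : (0:ℝ) ≤ 2 * α)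
    have step1 : s ^ 2 ≤ (1 - μ * α * θ) * d ^ 2 - α ^ 2 * ((1 + ν) ^ 2 - 1) * G ^ 2 := by
      linarith only [hs2, hIl, hid]
    have step2 : (α * ν * G) * s ≤ α * ν * L * (d * d) := by
      have hGs : G * s ≤ (L * d) * d :=
        mul_le_mul hGLd hsd hs0 (by positivity)
      have t := mul_le_mul_of_nonneg_left hGs (by positivity : (0:ℝ) ≤ α * ν)
      linarith only [t]
    have hθℓ : ℓ ^ 2 = 1 - μ * α * θ + 2 * ν * α * L := by
      rw [hℓsq, hθdef]
    have hkey : (s + α * ν * G) ^ 2 ≤ (ℓ * d) ^ 2 := by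
      have hexp : (s + α * ν * G) ^ 2 = s ^ 2 + 2 * ((α * ν * G) * s) + α ^ 2 * ν ^ 2 * G ^ 2 := by
        ring
      have hmid : (s + α * ν * G) ^ 2 ≤
          (1 - μ * α * θ + 2 * ν * α * L) * d ^ 2 - 2 * α ^ 2 * ν * G ^ 2 := by
        linarith only [step1, step2, hexp]
      have hnn : 0 ≤ 2 * α ^ 2 * ν * G ^ 2 := by positivity
      have hld : (ℓ * d) ^ 2 = (1 - μ * α * θ + 2 * ν * α * L) * d ^ 2 := by
        rw [mul_pow, hθℓ]
      linarith only [hmid, hnn, hld]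
    have hcore : s + α * ν * G ≤ ℓ * d := by
      have h2 : 0 ≤ ℓ * d := mul_nonneg hℓpos.le hd0
      exact le_of_pow_le_pow_left₀ two_ne_zero h2 hkey
    have hxe : x (k+1) - p = (x k - p - α • g) - α • e k := by
      rw [hrec k hk, hgdef, smul_add]
      abel
    have hnx : ‖x (k+1) - p‖ ≤ s + α * ‖e k‖ := by
      rw [hxe, hsdef]
      refine le_trans (norm_sub_le _ _) ?_
      gcongr
      rw [norm_smul, Real.norm_eq_abs, abs_of_pos hα]
    have hek : ‖e k‖ ≤ ε k + ν * G := by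
      rw [hGdef, hgdef]
      exact herr k hk
    have hfinal : Metric.infDist (x (k+1)) (Xstar k) ≤ ℓ * d + α * ε k := by
      calc Metric.infDist (x (k+1)) (Xstar k) ≤ dist (x (k+1)) p :=
            Metric.infDist_le_dist_of_mem hp
        _ = ‖x (k+1) - p‖ := dist_eq_norm _ _
        _ ≤ s + α * ‖e k‖ := hnx
        _ ≤ s + α * (ε k + ν * G) := by
            have t := mul_le_mul_of_nonneg_left hek hα.le
            linarith only [t]
        _ = (s + α * ν * G) + α * ε k := by ring
        _ ≤ ℓ * d + α * ε k := by linarith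
    rw [hddef] at hfinal
    exact hfinal
  -- transfer step
  have htrans : ∀ k, 1 ≤ k → Metric.infDist (x (k+1)) (Xstar (k+1)) ≤
      (Metric.infDist (x (k+1)) (Xstar k) + σv) / χ := by
    intro k hk
    have l1 := hD1 (k+1) (x (k+1))
    have l4 := hD2 k (x (k+1))
    have l3 : ‖ustar k - ustar (k+1)‖ ≤ σmax * σv := by
      rw [← hAx k, ← hAx (k+1), ← map_sub]
      calc ‖A (xstar k - xstar (k+1))‖ ≤ ‖A‖ * ‖xstar k - xstar (k+1)‖ := A.le_opNorm _
        _ ≤ σmax * σv := by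
            rw [hσmax]
            have h1 : ‖xstar k - xstar (k+1)‖ ≤ σv := by
              rw [norm_sub_rev]
              exact hσv k hk
            exact mul_le_mul_of_nonneg_left h1 (norm_nonneg _)
    have l2 : ‖A (x (k+1)) - ustar (k+1)‖ ≤
        ‖A (x (k+1)) - ustar k‖ + ‖ustar k - ustar (k+1)‖ := by
      have := dist_triangle (A (x (k+1))) (ustar k) (ustar (k+1))
      simpa [dist_eq_norm] using this
    rw [le_div_iff₀ hχpos, hχ, ← mul_div_assoc, div_le_iff₀ hσmax0]
    linarith only [l1, l2, l3, l4]
  -- positivity of constants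
  have hσv0 : 0 ≤ σv := le_trans (norm_nonneg _) (hσv 1 le_rfl)
  have hεbar0 : 0 ≤ εbar := le_trans (hεnn 0) (hεbar 0)
  have hζ0 : 0 ≤ ζ := by
    rw [hζ]
    positivity
  have hχℓ : 0 < χ - ℓ := by linarith
  have hαζ : α ≤ ζ := by
    rw [hζ, le_div_iff₀ hℓpos]
    have t1 : α * ℓ ≤ α * 1 := mul_le_mul_of_nonneg_left hℓ1.le hα.le
    have t2 : (0:ℝ) ≤ α * (α * L) := by positivity
    nlinarith [t1, t2]
  obtain ⟨B, hBdef⟩ : ∃ B : ℝ,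
      B = Metric.infDist (x 1) (Xstar 1) + (σv + ζ * εbar) / (χ - ℓ) := ⟨_, rfl⟩
  have hD10 : 0 ≤ Metric.infDist (x 1) (Xstar 1) := Metric.infDist_nonneg
  have key : ∀ k, 1 ≤ k → Metric.infDist (x k) (Xstar k) ≤ B := by
    intro k hk
    induction k, hk using Nat.le_induction with
    | base =>
        rw [hBdef]
        have h : 0 ≤ (σv + ζ * εbar) / (χ - ℓ) := by positivity
        linarith
    | succ k hk ih =>
        have hC := hcontr k hk
        have hT := htrans k hk
        have hstep2 : Metric.infDist (x (k+1)) (Xstar (k+1)) ≤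
            (ℓ * Metric.infDist (x k) (Xstar k) + α * ε k + σv) / χ := by
          refine le_trans hT ?_
          gcongr
        refine le_trans hstep2 ?_
        rw [div_le_iff₀ hχpos]
        have hεk0 := hεnn k
        have hεkb := hεbar k
        have hB0 : 0 ≤ B := le_trans Metric.infDist_nonneg ih
        have hBχℓ : (σv + ζ * εbar) ≤ B * (χ - ℓ) := by
          rw [hBdef, add_mul, div_mul_cancel₀ _ (ne_of_gt hχℓ)]
          linarith only [mul_nonneg hD10 hχℓ.le]
        have hαε : α * ε k ≤ ζ * εbar := by
          calc α * ε k ≤ ζ * ε k := mul_le_mul_of_nonneg_right hαζ hεk0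
            _ ≤ ζ * εbar := mul_le_mul_of_nonneg_left hεkb hζ0
        have lih := mul_le_mul_of_nonneg_left ih hℓpos.le
        linarith only [lih, hαε, hBχℓ]
  intro k hk
  have h1 : ‖gradient (f k) (x k)‖ ≤ L * Metric.infDist (x k) (Xstar k) := hGd k (x k)
  have h3 : L * Metric.infDist (x k) (Xstar k) ≤ L * B :=
    mul_le_mul_of_nonneg_left (key k hk) hL.le
  have h4 : L * B =
      L * Metric.infDist (x 1) (Xstar 1) + L * (σv + ζ * εbar) / (χ - ℓ) := by
    rw [hBdef]
    ring
  linarith
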